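/- Let R be a GCD domain, g(t) ∈ R[t] monic, and suppose f(t) ≡ h(t) mod g(t) with deg h(t) < deg g(t). Then the content of f(t) divides the content of h(t). -/

import Mathlib

open Polynomial

/-- Over a GCD domain: if `g` is monic, `f ≡ h (mod g)` and `deg h < deg g`, then the
content of `f` divides the content of `h`. -/
theorem stmt13 {R : Type*} [CommRing R] [IsDomain R] [NormalizedGCDMonoid R]
    (f g h q : R[X]) (hg : g.Monic) (hdeg : h.degree < g.degree)
    (hfh : f = h + g * q) :
    f.content ∣ h.content := by
  have hmod : f %ₘ g = h := by
    have h1 : h %ₘ g = h := (modByMonic_eq_self_iff hg).2 hdeg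
    rw [hfh, add_modByMonic, h1, self_mul_modByMonic hg, add_zero]
  have key : f %ₘ g = C f.content * (f.primPart %ₘ g) := by
    conv_lhs => rw [f.eq_C_content_mul_primPart]
    rw [← smul_eq_C_mul, ← smul_eq_C_mul, smul_modByMonic]
  rw [← hmod, key]
  exact dvd_content_iff_C_dvd.mpr (dvd_mul_right _ _)
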